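/- Under the same hypotheses as the ball-disjointification lemma but with the modification that radii are combined by maximum instead of sum (i.e. balls have radius f_{n_i}(max{r_j : g(j) = i})) and the function f satisfies 2·f_{n₁}(r₁) + f_{n₂}(r₂) ≤ f_{n₁+n₂+1}(max(r₁,r₂)), the same conclusion holds: pairwise disjoint balls covering all the points a₀,…,a_{m-1} with Σ_{i∈w} n_i ≤ m − |w|. -/

import Mathlib

open scoped BigOperators

theorem stmt_4 {X : Type*} (d : X → X → ℕ∞)
    (hsymm : ∀ x y, d x y = d y x) (hself : ∀ x, d x x = 0)
    (htri : ∀ x y z, d x z ≤ d x y + d y z)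
    (f : ℕ → ℕ → ℕ)
    (hmono_n : ∀ r : ℕ, Monotone (fun n => f n r))
    (hmono_r : ∀ n : ℕ, Monotone (f n))
    (hf : ∀ n₁ n₂ r₁ r₂ : ℕ, 2 * f n₁ r₁ + f n₂ r₂ ≤ f (n₁ + n₂ + 1) (max r₁ r₂))
    (m : ℕ) (a : Fin m → X) (r : Fin m → ℕ) :
    ∃ (w : Finset (Fin m)) (nn : Fin m → ℕ) (g : Fin m → Fin m),
      (∀ j, g j ∈ w) ∧ (∀ i ∈ w, g i = i) ∧
      (∑ i ∈ w, nn i) ≤ m - w.card ∧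
      (∀ i ∈ w, ∀ i' ∈ w, i ≠ i' →
        Disjoint
          {x : X | d x (a i) ≤
            (f (nn i) ((Finset.univ.filter (fun j => g j = i)).sup r) : ℕ∞)}
          {x : X | d x (a i') ≤
            (f (nn i') ((Finset.univ.filter (fun j => g j = i')).sup r) : ℕ∞)}) ∧
      (∀ j : Fin m, ∃ i ∈ w,
        d (a j) (a i) ≤
          (f (nn i) ((Finset.univ.filter (fun j' => g j' = i)).sup r) : ℕ∞)) := by
  classical
  set R : (Fin m → Fin m) → Fin m → ℕ :=
    fun g i => (Finset.univ.filter (fun j => g j = i)).sup r with hRdef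
  suffices H : ∀ k : ℕ, ∀ (w : Finset (Fin m)) (nn : Fin m → ℕ) (g : Fin m → Fin m),
      w.card ≤ k →
      (∀ j, g j ∈ w) → (∀ i ∈ w, g i = i) →
      (∑ i ∈ w, nn i) + w.card ≤ m →
      (∀ j, d (a j) (a (g j)) ≤ (f (nn (g j)) (R g (g j)) : ℕ∞)) →
      ∃ (w : Finset (Fin m)) (nn : Fin m → ℕ) (g : Fin m → Fin m),
      (∀ j, g j ∈ w) ∧ (∀ i ∈ w, g i = i) ∧
      (∑ i ∈ w, nn i) ≤ m - w.card ∧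
      (∀ i ∈ w, ∀ i' ∈ w, i ≠ i' →
        Disjoint
          {x : X | d x (a i) ≤ (f (nn i) (R g i) : ℕ∞)}
          {x : X | d x (a i') ≤ (f (nn i') (R g i') : ℕ∞)}) ∧
      (∀ j : Fin m, ∃ i ∈ w,
        d (a j) (a i) ≤ (f (nn i) (R g i) : ℕ∞)) by
    have := H m Finset.univ (fun _ => 0) id (by simp)
      (fun j => Finset.mem_univ _) (fun i _ => rfl)
      (by simp) (fun j => by simp [hself])
    simpa [hRdef] using this
  intro k
  induction k with
  | zero =>
    intro w nn g hcard hgw hfix hsum hcov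
    have hw : w = ∅ := Finset.card_eq_zero.mp (Nat.le_zero.mp hcard)
    subst hw
    exact ⟨∅, nn, g, hgw, hfix, by simp,
      fun i hi => absurd hi (by simp),
      fun j => absurd (hgw j) (by simp)⟩
  | succ k ih =>
    intro w nn g hcard hgw hfix hsum hcov
    by_cases hdis : ∀ i ∈ w, ∀ i' ∈ w, i ≠ i' →
        Disjoint
          {x : X | d x (a i) ≤ (f (nn i) (R g i) : ℕ∞)}
          {x : X | d x (a i') ≤ (f (nn i') (R g i') : ℕ∞)}
    · exact ⟨w, nn, g, hgw, hfix, Nat.le_sub_of_add_le hsum, hdis,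
        fun j => ⟨g j, hgw j, hcov j⟩⟩
    · push_neg at hdis
      obtain ⟨i, hi, i', hi', hne, hnd⟩ := hdis
      obtain ⟨x, hx1, hx2⟩ := Set.not_disjoint_iff.mp hnd
      simp only [Set.mem_setOf_eq] at hx1 hx2
      set w' : Finset (Fin m) := w.erase i' with hw'def
      set nn' : Fin m → ℕ := Function.update nn i (nn i + nn i' + 1) with hnn'def
      set g' : Fin m → Fin m := fun j => if g j = i' then i else g j with hg'def
      have hii' : i ∈ w' := Finset.mem_erase.mpr ⟨hne, hi⟩
      have hg'i : ∀ j, g j = i → g' j = i := by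
        intro j hj; simp [hg'def, hj, hne]
      have hg'i' : ∀ j, g j = i' → g' j = i := by
        intro j hj; simp [hg'def, hj]
      have hg'other : ∀ j, g j ≠ i' → g' j = g j := by
        intro j hj; simp [hg'def, hj]
      -- fibers
      have hRi_le : R g i ≤ R g' i := by
        apply Finset.sup_mono
        intro j hj
        simp only [Finset.mem_filter, Finset.mem_univ, true_and] at hj ⊢
        exact hg'i j hj
      have hRi'_le : R g i' ≤ R g' i := by
        apply Finset.sup_mono
        intro j hj
        simp only [Finset.mem_filter, Finset.mem_univ, true_and] at hj ⊢
        exact hg'i' j hj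
      have hRother : ∀ l, l ≠ i → l ≠ i' → R g' l = R g l := by
        intro l hl1 hl2
        have hfe : (Finset.univ.filter (fun j => g' j = l)) =
            (Finset.univ.filter (fun j => g j = l)) := by
          apply Finset.filter_congr
          intro j _
          simp only [hg'def, eq_iff_iff]
          constructor
          · intro h
            by_cases hc : g j = i'
            · simp [hc] at h; exact absurd h.symm hl1
            · simpa [hc] using h
          · intro h
            have : g j ≠ i' := by rw [h]; exact hl2
            rw [if_neg this]; exact h
        simp only [hRdef, hg'def] at hfe ⊢
        rw [hfe]
      have hcard' : w'.card = w.card - 1 := Finset.card_erase_of_mem hi'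
      have hwpos : 1 ≤ w.card := Finset.card_pos.mpr ⟨i, hi⟩
      apply ih w' nn' g'
      · omega
      · intro j
        refine Finset.mem_erase.mpr ⟨?_, ?_⟩
        · by_cases hc : g j = i'
          · rw [hg'i' j hc]; exact hne
          · rw [hg'other j hc]; exact hc
        · by_cases hc : g j = i'
          · rw [hg'i' j hc]; exact hi
          · rw [hg'other j hc]; exact hgw j
      · intro l hl
        have hl' := Finset.mem_erase.mp hl
        have : g l = l := hfix l hl'.2
        rw [hg'other l (by rw [this]; exact hl'.1), this]
      · -- sum invariant
        have h1 : ∑ j ∈ w', nn' j = (nn i + nn i' + 1) + ∑ j ∈ w'.erase i, nn j := by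
          rw [hnn'def]
          rw [← Finset.add_sum_erase _ _ hii', Function.update_self]
          congr 1
          apply Finset.sum_congr rfl
          intro j hj
          exact Function.update_of_ne (Finset.mem_erase.mp hj).1 _ _
        have h2 : ∑ j ∈ w', nn j = nn i + ∑ j ∈ w'.erase i, nn j :=
          (Finset.add_sum_erase _ _ hii').symm
        have h3 : ∑ j ∈ w, nn j = nn i' + ∑ j ∈ w', nn j :=
          (Finset.add_sum_erase _ _ hi').symm
        omega
      · -- coverage
        intro j
        by_cases hc : g j = i'
        · -- merged case
          have hg'j : g' j = i := hg'i' j hc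
          rw [hg'j]
          have hd1 : d (a j) (a i') ≤ (f (nn i') (R g i') : ℕ∞) := by
            have := hcov j; rwa [hc] at this
          have hd2 : d (a i') x ≤ (f (nn i') (R g i') : ℕ∞) := by
            rw [hsymm]; exact hx2
          have hd3 : d x (a i) ≤ (f (nn i) (R g i) : ℕ∞) := hx1
          have hchain : d (a j) (a i) ≤ d (a j) (a i') + d (a i') x + d x (a i) := by
            calc d (a j) (a i) ≤ d (a j) (a i') + d (a i') (a i) := htri _ _ _
              _ ≤ d (a j) (a i') + (d (a i') x + d x (a i)) :=
                add_le_add_right (htri _ _ _) _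
              _ = d (a j) (a i') + d (a i') x + d x (a i) := by ring
          have hstep : d (a j) (a i) ≤
              ((2 * f (nn i') (R g i') + f (nn i) (R g i) : ℕ) : ℕ∞) := by
            refine hchain.trans ?_
            push_cast
            calc d (a j) (a i') + d (a i') x + d x (a i)
                ≤ (f (nn i') (R g i') : ℕ∞) + (f (nn i') (R g i') : ℕ∞)
                  + (f (nn i) (R g i) : ℕ∞) :=
                  add_le_add (add_le_add hd1 hd2) hd3
              _ = 2 * (f (nn i') (R g i') : ℕ∞) + (f (nn i) (R g i) : ℕ∞) := by ring
          refine hstep.trans ?_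
          rw [Nat.cast_le]
          have := hf (nn i') (nn i) (R g i') (R g i)
          have hmax : max (R g i') (R g i) ≤ R g' i := max_le hRi'_le hRi_le
          have hnn'i : nn' i = nn i + nn i' + 1 := Function.update_self _ _ _
          rw [hnn'i]
          calc 2 * f (nn i') (R g i') + f (nn i) (R g i)
              ≤ f (nn i' + nn i + 1) (max (R g i') (R g i)) := this
            _ ≤ f (nn i + nn i' + 1) (R g' i) := by
                have h1 := hmono_r (nn i' + nn i + 1) hmax
                have h2 := hmono_n (R g' i) (show nn i' + nn i + 1 ≤ nn i + nn i' + 1 by omega)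
                exact h1.trans h2
        · rw [hg'other j hc]
          by_cases hc2 : g j = i
          · rw [hc2]
            have hnn'i : nn' i = nn i + nn i' + 1 := Function.update_self _ _ _
            have h0 : d (a j) (a i) ≤ (f (nn i) (R g i) : ℕ∞) := by
              rw [← hc2]; exact hcov j
            refine h0.trans ?_
            rw [Nat.cast_le, hnn'i]
            calc f (nn i) (R g i) ≤ f (nn i) (R g' i) := hmono_r _ hRi_le
              _ ≤ f (nn i + nn i' + 1) (R g' i) := hmono_n _ (by omega)
          · rw [hRother (g j) hc2 hc]
            have : nn' (g j) = nn (g j) := Function.update_of_ne hc2 _ _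
            rw [this]
            exact hcov j
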